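/- The four-dimensional algebra D_t over a field F of characteristic 0 with basis e₁, e₂ (even), ξ, η (odd) and multiplication e_i∘e_i = e_i, e₁∘e₂ = 0, e_i∘ξ = (1/2)ξ, e_i∘η = (1/2)η, ξ∘η = -η∘ξ = e₁ + t·e₂ (all other products determined by supercommutativity) is simple (has no nonzero proper two-sided ideals) if and only if t ≠ 0. -/

import Mathlib

/-- The multiplication of the 4-dimensional superalgebra `D_t`, written in the
basis `e₁, e₂` (even), `ξ, η` (odd): an element `(a₁, a₂, a₃, a₄)` stands for
`a₁e₁ + a₂e₂ + a₃ξ + a₄η`, and the table is `eᵢ∘eᵢ = eᵢ`, `e₁∘e₂ = 0`,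
`eᵢ∘ξ = (1/2)ξ`, `eᵢ∘η = (1/2)η`, `ξ∘η = -η∘ξ = e₁ + t·e₂`, `ξ∘ξ = η∘η = 0`. -/
def DtMul {F : Type*} [Field F] (t : F) :
    (F × F × F × F) → (F × F × F × F) → (F × F × F × F) :=
  fun a b =>
    (a.1 * b.1 + (a.2.2.1 * b.2.2.2 - a.2.2.2 * b.2.2.1),
     a.2.1 * b.2.1 + t * (a.2.2.1 * b.2.2.2 - a.2.2.2 * b.2.2.1),
     (2 : F)⁻¹ * ((a.1 + a.2.1) * b.2.2.1 + a.2.2.1 * (b.1 + b.2.1)),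
     (2 : F)⁻¹ * ((a.1 + a.2.1) * b.2.2.2 + a.2.2.2 * (b.1 + b.2.1)))

section Aux

variable {F : Type*} [Field F] {t : F} {I : Submodule F (F × F × F × F)}

/-- From membership of `(p,q,r,s)` in an ideal, get `(p,0,0,0)` and `(0,q,0,0)`. -/
lemma Dt_memEven
    (hI : ∀ x : F × F × F × F, ∀ y ∈ I, DtMul t x y ∈ I ∧ DtMul t y x ∈ I)
    {p q r s : F} (h : ((p, q, r, s) : F × F × F × F) ∈ I) :
    ((p, 0, 0, 0) : F × F × F × F) ∈ I ∧ ((0, q, 0, 0) : F × F × F × F) ∈ I := by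
  have h1 := (hI (1, 0, 0, 0) _ h).1
  have h2 := (hI (0, 1, 0, 0) _ h).1
  simp only [DtMul] at h1 h2
  ring_nf at h1 h2
  have hd : ((p, -q, 0, 0) : F × F × F × F) ∈ I := by
    have := I.sub_mem h1 h2
    convert this using 1
    simp [Prod.ext_iff]
  have h3 := (hI (1, 0, 0, 0) _ hd).1
  have h4 := (hI (0, 1, 0, 0) _ hd).1
  simp only [DtMul] at h3 h4
  ring_nf at h3 h4
  constructor
  · simpa using h3
  · simpa using I.neg_mem h4

lemma Dt_memS
    (hI : ∀ x : F × F × F × F, ∀ y ∈ I, DtMul t x y ∈ I ∧ DtMul t y x ∈ I)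
    {p q r s : F} (h : ((p, q, r, s) : F × F × F × F) ∈ I) :
    ((s, 0, 0, 0) : F × F × F × F) ∈ I := by
  have h1 := (hI (0, 0, 1, 0) _ h).1
  simp only [DtMul] at h1
  ring_nf at h1
  exact (Dt_memEven hI h1).1

lemma Dt_memR
    (hI : ∀ x : F × F × F × F, ∀ y ∈ I, DtMul t x y ∈ I ∧ DtMul t y x ∈ I)
    {p q r s : F} (h : ((p, q, r, s) : F × F × F × F) ∈ I) :
    ((r, 0, 0, 0) : F × F × F × F) ∈ I := by
  have h1 := (hI (0, 0, 0, 1) _ h).1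
  simp only [DtMul] at h1
  ring_nf at h1
  have := (Dt_memEven hI h1).1
  simpa using I.neg_mem this

/-- From a nonzero scalar multiple of a basis vector, get the basis vector. -/
lemma Dt_smul_cancel {v : F × F × F × F} {c : F} (hc : c ≠ 0)
    (h : c • v ∈ I) : v ∈ I := by
  have := I.smul_mem c⁻¹ h
  rwa [smul_smul, inv_mul_cancel₀ hc, one_smul] at this

end Aux

/-- The four-dimensional superalgebra `D_t` over a field of
characteristic 0 is simple (has no nonzero proper two-sided ideals) if and only
if `t ≠ 0`. -/
theorem Dt_simple_iff
    (F : Type*) [Field F] [CharZero F] (t : F) :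
    (∀ I : Submodule F (F × F × F × F),
      (∀ x : F × F × F × F, ∀ y ∈ I, DtMul t x y ∈ I ∧ DtMul t y x ∈ I) →
      I = ⊥ ∨ I = ⊤) ↔ t ≠ 0 := by
  constructor
  · intro h ht
    -- when t = 0, the subspace {x | x.2.1 = 0} is a nontrivial proper ideal
    subst ht
    set p : (F × F × F × F) →ₗ[F] F :=
      (LinearMap.fst F F (F × F)).comp (LinearMap.snd F F (F × F × F)) with hp
    have hker : ∀ x : F × F × F × F, x ∈ LinearMap.ker p ↔ x.2.1 = 0 := by
      intro x; simp [hp, LinearMap.mem_ker]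
    have hideal : ∀ x : F × F × F × F, ∀ y ∈ LinearMap.ker p,
        DtMul 0 x y ∈ LinearMap.ker p ∧ DtMul 0 y x ∈ LinearMap.ker p := by
      intro x y hy
      rw [hker] at hy
      constructor <;> · rw [hker]; simp [DtMul, hy]
    rcases h _ hideal with hbot | htop
    · have : ((1, 0, 0, 0) : F × F × F × F) ∈ LinearMap.ker p := by
        rw [hker]
      rw [hbot, Submodule.mem_bot] at this
      simp [Prod.ext_iff] at this
    · have : ((0, 1, 0, 0) : F × F × F × F) ∈ LinearMap.ker p := by
        rw [htop]; trivial
      rw [hker] at this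
      exact one_ne_zero this
  · intro ht I hI
    by_cases hbot : I = ⊥
    · exact Or.inl hbot
    right
    obtain ⟨y, hy, hy0⟩ := Submodule.exists_mem_ne_zero_of_ne_bot hbot
    obtain ⟨a, b, c, d⟩ := y
    -- first show e₁ ∈ I
    have he1 : ((1, 0, 0, 0) : F × F × F × F) ∈ I := by
      by_cases ha : a ≠ 0
      · have := (Dt_memEven hI hy).1
        have : ((a, 0, 0, 0) : F × F × F × F) = a • (1, 0, 0, 0) := by
          simp [Prod.ext_iff]
        exact Dt_smul_cancel ha (this ▸ (Dt_memEven hI hy).1)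
      by_cases hc : c ≠ 0
      · have h1 := Dt_memR hI hy
        have : ((c, 0, 0, 0) : F × F × F × F) = c • (1, 0, 0, 0) := by
          simp [Prod.ext_iff]
        exact Dt_smul_cancel hc (this ▸ h1)
      by_cases hd : d ≠ 0
      · have h1 := Dt_memS hI hy
        have : ((d, 0, 0, 0) : F × F × F × F) = d • (1, 0, 0, 0) := by
          simp [Prod.ext_iff]
        exact Dt_smul_cancel hd (this ▸ h1)
      -- now a = c = d = 0, so b ≠ 0
      push_neg at ha hc hd
      subst ha; subst hc; subst hd
      have hb : b ≠ 0 := by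
        intro hb; apply hy0; simp [hb]
      have he2 : ((0, 1, 0, 0) : F × F × F × F) ∈ I := by
        have : ((0, b, 0, 0) : F × F × F × F) = b • (0, 1, 0, 0) := by
          simp [Prod.ext_iff]
        exact Dt_smul_cancel hb (this ▸ hy)
      -- ξ ∘ e₂ = (0,0,1/2,0)
      have hxi := (hI (0, 0, 1, 0) _ he2).1
      simp only [DtMul] at hxi
      ring_nf at hxi
      -- η ∘ (that) : (-(1/2), -(t/2), 0, 0)
      have heo := (hI (0, 0, 0, 1) _ hxi).1
      simp only [DtMul] at heo
      ring_nf at heo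
      have h1 := (Dt_memEven hI heo).1
      have h2' : ((1 / 2 : F), 0, 0, 0) ∈ I := by
        have h2 := I.neg_mem h1
        simpa [Prod.ext_iff, neg_div] using h2
      have : (((1 / 2 : F)), 0, 0, 0) = ((1 / 2 : F)) • ((1 : F), (0 : F), (0 : F), (0 : F)) := by
        simp [Prod.ext_iff]
      exact Dt_smul_cancel (by norm_num : ((1/2 : F) : F) ≠ 0) (this ▸ h2')
    -- from e₁ get ξ, η, e₂
    have hxi' := (hI (0, 0, 1, 0) _ he1).1
    simp only [DtMul] at hxi'
    ring_nf at hxi'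
    have hxi : ((0, 0, 1, 0) : F × F × F × F) ∈ I := by
      have : ((0, 0, (2:F)⁻¹, 0) : F × F × F × F) = (2:F)⁻¹ • (0, 0, 1, 0) := by
        simp [Prod.ext_iff]
      apply Dt_smul_cancel (by norm_num : ((2:F)⁻¹ : F) ≠ 0)
      rw [← this]
      convert hxi' using 2 <;> ring_nf
    have heta' := (hI (0, 0, 0, 1) _ he1).1
    simp only [DtMul] at heta'
    ring_nf at heta'
    have heta : ((0, 0, 0, 1) : F × F × F × F) ∈ I := by
      have : ((0, 0, 0, (2:F)⁻¹) : F × F × F × F) = (2:F)⁻¹ • (0, 0, 0, 1) := by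
        simp [Prod.ext_iff]
      apply Dt_smul_cancel (by norm_num : ((2:F)⁻¹ : F) ≠ 0)
      rw [← this]
      convert heta' using 2 <;> ring_nf
    -- ξ ∘ η = (1, t, 0, 0)
    have hprod := (hI (0, 0, 1, 0) _ heta).1
    simp only [DtMul] at hprod
    ring_nf at hprod
    have hte2 : ((0, t, 0, 0) : F × F × F × F) ∈ I := (Dt_memEven hI hprod).2
    have he2 : ((0, 1, 0, 0) : F × F × F × F) ∈ I := by
      have : ((0, t, 0, 0) : F × F × F × F) = t • (0, 1, 0, 0) := by
        simp [Prod.ext_iff]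
      exact Dt_smul_cancel ht (this ▸ hte2)
    -- conclude I = ⊤
    rw [Submodule.eq_top_iff']
    intro x
    obtain ⟨x1, x2, x3, x4⟩ := x
    have hx : ((x1, x2, x3, x4) : F × F × F × F) =
        x1 • (1, 0, 0, 0) + x2 • (0, 1, 0, 0) + x3 • (0, 0, 1, 0) + x4 • (0, 0, 0, 1) := by
      simp [Prod.ext_iff]
    rw [hx]
    exact I.add_mem (I.add_mem (I.add_mem (I.smul_mem _ he1) (I.smul_mem _ he2))
      (I.smul_mem _ hxi)) (I.smul_mem _ heta)
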